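/- Let ℒ = max_{j∈[n]} E[L_v v_j], where L_v = (1/n) Σ_{i=1}^n v_i L_i (a smoothness constant of f_v). Then for every x ∈ ℝ^d and every minimizer x* of f: E[‖∇f_v(x) − ∇f_v(x*)‖²] ≤ 2 ℒ · D_f(x, x*). -/

import Mathlib

open MeasureTheory Finset
open scoped RealInnerProductSpace

lemma stmt5_integrable {n : ℕ} {Ω : Type*} [MeasurableSpace Ω] (μ : Measure Ω)
    [IsProbabilityMeasure μ] (v : Ω → Fin n → ℝ) (hv_meas : Measurable v)
    (hv_fin : (Set.range v).Finite) (F : (Fin n → ℝ) → ℝ) (hF : Continuous F) :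
    Integrable (fun ω => F (v ω)) μ := by
  have hmeas : Measurable fun ω => F (v ω) := hF.measurable.comp hv_meas
  obtain ⟨C, hC⟩ := (hv_fin.image (fun w => |F w|)).bddAbove
  refine Integrable.mono' (integrable_const C) hmeas.aestronglyMeasurable ?_
  filter_upwards with ω
  simpa [Real.norm_eq_abs] using hC ⟨v ω, Set.mem_range_self ω, rfl⟩

lemma stmt5_cocoercive {d : ℕ} (g : EuclideanSpace ℝ (Fin d) → ℝ)
    (g' : EuclideanSpace ℝ (Fin d) → EuclideanSpace ℝ (Fin d)) (L : ℝ) (hL : 0 ≤ L)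
    (hs : ∀ a y, g y ≤ g a + ⟪g' a, y - a⟫ + L / 2 * ‖y - a‖ ^ 2)
    (hc : ∀ a y, g a + ⟪g' a, y - a⟫ ≤ g y) (x y : EuclideanSpace ℝ (Fin d)) :
    ‖g' x - g' y‖ ^ 2 ≤ 2 * L * (g x - g y - ⟪g' y, x - y⟫) := by
  set u := g' x - g' y with hu
  set D := g x - g y - ⟪g' y, x - y⟫ with hD
  have hDpos : 0 ≤ D := by have := hc y x; simp only [hD]; linarith
  have key : ∀ ε : ℝ, 0 < ε → ‖u‖ ^ 2 ≤ 2 * L * D + ε * (2 * D) := by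
    intro ε hε
    set L' := L + ε with hL'
    have hL'pos : 0 < L' := by linarith
    set z := x - (1 / L') • u with hz
    have h1 := hc y z
    have h2 := hs x z
    have hzx : z - x = -((1 / L') • u) := by rw [hz]; abel
    have hzy : z - y = (x - y) - (1 / L') • u := by rw [hz]; abel
    have e1 : ⟪g' x, z - x⟫ = -(1 / L') * ⟪g' x, u⟫ := by
      rw [hzx, inner_neg_right, real_inner_smul_right]; ring
    have e2 : ⟪g' y, z - y⟫ = ⟪g' y, x - y⟫ - (1 / L') * ⟪g' y, u⟫ := by
      rw [hzy, inner_sub_right, real_inner_smul_right]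
    have e3 : ‖z - x‖ ^ 2 = (1 / L') ^ 2 * ‖u‖ ^ 2 := by
      rw [hzx, norm_neg, norm_smul, Real.norm_eq_abs,
        abs_of_pos (by positivity : (0:ℝ) < 1 / L'), mul_pow]
    have e4 : ⟪g' x, u⟫ - ⟪g' y, u⟫ = ‖u‖ ^ 2 := by
      rw [← inner_sub_left, ← hu, real_inner_self_eq_norm_sq]
    rw [e1] at h2; rw [e2] at h1; rw [e3] at h2
    have h3 := le_trans h1 h2
    have e5 : (1 / L') * ⟪g' x, u⟫ - (1 / L') * ⟪g' y, u⟫ = (1 / L') * ‖u‖ ^ 2 := by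
      rw [← mul_sub, e4]
    -- from h3 : (1/L') * ‖u‖^2 - L/2 * (1/L')^2 * ‖u‖^2 ≤ D
    have h5 : (1 / L') * ‖u‖ ^ 2 - L / 2 * ((1 / L') ^ 2 * ‖u‖ ^ 2) ≤ D := by
      simp only [hD]; linarith [h3, e5]
    have h6 : L' * ‖u‖ ^ 2 ≤ (L + 2 * ε) * ‖u‖ ^ 2 := by
      nlinarith [sq_nonneg ‖u‖]
    have h7 : (L + 2 * ε) * ‖u‖ ^ 2 ≤ 2 * L' ^ 2 * D := by
      have h5' := mul_le_mul_of_nonneg_left h5 (by positivity : (0:ℝ) ≤ 2 * L' ^ 2)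
      have hexp : 2 * L' ^ 2 * ((1 / L') * ‖u‖ ^ 2 - L / 2 * ((1 / L') ^ 2 * ‖u‖ ^ 2))
          = (L + 2 * ε) * ‖u‖ ^ 2 := by
        field_simp
        ring
      linarith [hexp ▸ h5']
    have h8 : ‖u‖ ^ 2 ≤ 2 * L' * D := by
      have h9 : L' * ‖u‖ ^ 2 ≤ L' * (2 * L' * D) := by nlinarith [le_trans h6 h7]
      exact le_of_mul_le_mul_left h9 hL'pos
    calc ‖u‖ ^ 2 ≤ 2 * L' * D := h8
      _ = 2 * L * D + ε * (2 * D) := by rw [hL']; ring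
  refine le_of_forall_pos_le_add fun ε hε => ?_
  have h2D1 : (0:ℝ) < 2 * D + 1 := by linarith
  have hk := key (ε / (2 * D + 1)) (by positivity)
  have hle : ε / (2 * D + 1) * (2 * D) ≤ ε := by
    rw [div_mul_eq_mul_div, div_le_iff₀ h2D1]
    nlinarith
  calc ‖u‖ ^ 2 ≤ 2 * L * D + ε / (2 * D + 1) * (2 * D) := hk
    _ ≤ 2 * L * D + ε := by linarith

lemma stmt5_weighted {d n : ℕ}
    (f : Fin n → EuclideanSpace ℝ (Fin d) → ℝ)
    (f' : Fin n → EuclideanSpace ℝ (Fin d) → EuclideanSpace ℝ (Fin d))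
    (Li : Fin n → ℝ)
    (hsmooth : ∀ i x y, f i y ≤ f i x + ⟪f' i x, y - x⟫ + Li i / 2 * ‖y - x‖ ^ 2)
    (hconv : ∀ i x y, f i x + ⟪f' i x, y - x⟫ ≤ f i y)
    (w : Fin n → ℝ) (hw : ∀ i, 0 ≤ w i) (hLi : ∀ i, 0 ≤ Li i)
    (x xstar : EuclideanSpace ℝ (Fin d)) :
    ‖(n : ℝ)⁻¹ • ∑ i, w i • f' i x - (n : ℝ)⁻¹ • ∑ i, w i • f' i xstar‖ ^ 2
    ≤ 2 * ((n : ℝ)⁻¹ * ∑ i, w i * Li i)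
      * ((n : ℝ)⁻¹ * ∑ i, w i * (f i x - f i xstar - ⟪f' i xstar, x - xstar⟫)) := by
  have hninv : (0:ℝ) ≤ (n : ℝ)⁻¹ := by positivity
  have hinner : ∀ (a z : EuclideanSpace ℝ (Fin d)),
      ⟪(n : ℝ)⁻¹ • ∑ i, w i • f' i a, z⟫ = (n : ℝ)⁻¹ * ∑ i, w i * ⟪f' i a, z⟫ := by
    intro a z
    rw [real_inner_smul_left, sum_inner]
    simp only [real_inner_smul_left]
  have hL : 0 ≤ (n : ℝ)⁻¹ * ∑ i, w i * Li i :=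
    mul_nonneg hninv (Finset.sum_nonneg fun i _ => mul_nonneg (hw i) (hLi i))
  have hs : ∀ a y, (n : ℝ)⁻¹ * ∑ i, w i * f i y
      ≤ (n : ℝ)⁻¹ * ∑ i, w i * f i a + ⟪(n : ℝ)⁻¹ • ∑ i, w i • f' i a, y - a⟫
        + ((n : ℝ)⁻¹ * ∑ i, w i * Li i) / 2 * ‖y - a‖ ^ 2 := by
    intro a y
    have h2 : ∑ i, w i * f i y
        ≤ ∑ i, w i * (f i a + ⟪f' i a, y - a⟫ + Li i / 2 * ‖y - a‖ ^ 2) :=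
      Finset.sum_le_sum fun i _ => mul_le_mul_of_nonneg_left (hsmooth i a y) (hw i)
    calc (n : ℝ)⁻¹ * ∑ i, w i * f i y
        ≤ (n : ℝ)⁻¹ * ∑ i, w i * (f i a + ⟪f' i a, y - a⟫ + Li i / 2 * ‖y - a‖ ^ 2) :=
          mul_le_mul_of_nonneg_left h2 hninv
      _ = (n : ℝ)⁻¹ * ∑ i, w i * f i a + ⟪(n : ℝ)⁻¹ • ∑ i, w i • f' i a, y - a⟫
        + ((n : ℝ)⁻¹ * ∑ i, w i * Li i) / 2 * ‖y - a‖ ^ 2 := by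
          rw [hinner]
          have e : ∀ i : Fin n, w i * (f i a + ⟪f' i a, y - a⟫ + Li i / 2 * ‖y - a‖ ^ 2)
              = w i * f i a + w i * ⟪f' i a, y - a⟫ + (w i * Li i) * (‖y - a‖ ^ 2 / 2) :=
            fun i => by ring
          simp only [e, Finset.sum_add_distrib, ← Finset.sum_mul]
          ring
  have hc : ∀ a y, (n : ℝ)⁻¹ * ∑ i, w i * f i a + ⟪(n : ℝ)⁻¹ • ∑ i, w i • f' i a, y - a⟫
      ≤ (n : ℝ)⁻¹ * ∑ i, w i * f i y := by
    intro a y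
    have h2 : ∑ i, w i * (f i a + ⟪f' i a, y - a⟫) ≤ ∑ i, w i * f i y :=
      Finset.sum_le_sum fun i _ => mul_le_mul_of_nonneg_left (hconv i a y) (hw i)
    have h3 := mul_le_mul_of_nonneg_left h2 hninv
    rw [hinner]
    have e : ∀ i : Fin n, w i * (f i a + ⟪f' i a, y - a⟫)
        = w i * f i a + w i * ⟪f' i a, y - a⟫ := fun i => by ring
    simp only [e, Finset.sum_add_distrib] at h3
    linarith [h3]
  have key := stmt5_cocoercive (fun y => (n : ℝ)⁻¹ * ∑ i, w i * f i y)
    (fun y => (n : ℝ)⁻¹ • ∑ i, w i • f' i y) ((n : ℝ)⁻¹ * ∑ i, w i * Li i) hL hs hc x xstar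
  have hrhs : (n : ℝ)⁻¹ * ∑ i, w i * f i x - (n : ℝ)⁻¹ * ∑ i, w i * f i xstar
      - ⟪(n : ℝ)⁻¹ • ∑ i, w i • f' i xstar, x - xstar⟫
      = (n : ℝ)⁻¹ * ∑ i, w i * (f i x - f i xstar - ⟪f' i xstar, x - xstar⟫) := by
    rw [hinner]
    have e : ∀ i : Fin n, w i * (f i x - f i xstar - ⟪f' i xstar, x - xstar⟫)
        = w i * f i x - w i * f i xstar - w i * ⟪f' i xstar, x - xstar⟫ := fun i => by ring
    simp only [e, Finset.sum_sub_distrib]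
    ring
  rw [← hrhs]
  exact key

/-- Expected Smoothness, Lemma 2: for a sampling vector `v` (nonnegative,
finitely-valued, `E[vᵢ] = 1`), with `ℒ = max_j E[L_v v_j]` and `L_v = (1/n) Σᵢ vᵢ Lᵢ`,
for every `x` and every minimizer `x*` of `f`:
`E[‖∇f_v(x) − ∇f_v(x*)‖²] ≤ 2 ℒ D_f(x, x*)`. -/
theorem stmt_5
    {d n : ℕ} (hn : 0 < n)
    {Ω : Type*} [MeasurableSpace Ω] (μ : Measure Ω) [IsProbabilityMeasure μ]
    (f : Fin n → EuclideanSpace ℝ (Fin d) → ℝ)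
    (f' : Fin n → EuclideanSpace ℝ (Fin d) → EuclideanSpace ℝ (Fin d))
    (Li : Fin n → ℝ)
    (hsmooth : ∀ i x y, f i y ≤ f i x + ⟪f' i x, y - x⟫ + Li i / 2 * ‖y - x‖ ^ 2)
    (hconv : ∀ i x y, f i x + ⟪f' i x, y - x⟫ ≤ f i y)
    -- the sampling vector
    (v : Ω → Fin n → ℝ) (hv_meas : Measurable v) (hv_fin : (Set.range v).Finite)
    (hv_nonneg : ∀ ω i, 0 ≤ v ω i) (hv_mean : ∀ i, ∫ ω, v ω i ∂μ = 1)
    -- x* is a minimizer of f = (1/n) Σ f_i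
    (xstar : EuclideanSpace ℝ (Fin d))
    (hmin : ∀ y, (n : ℝ)⁻¹ * ∑ i, f i xstar ≤ (n : ℝ)⁻¹ * ∑ i, f i y)
    (x : EuclideanSpace ℝ (Fin d)) :
    ∫ ω, ‖(n : ℝ)⁻¹ • ∑ i, v ω i • f' i x - (n : ℝ)⁻¹ • ∑ i, v ω i • f' i xstar‖ ^ 2 ∂μ
    ≤ 2 * (Finset.univ.sup' ⟨⟨0, hn⟩, Finset.mem_univ _⟩
          (fun j => ∫ ω, ((n : ℝ)⁻¹ * ∑ i, v ω i * Li i) * v ω j ∂μ))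
        * ((n : ℝ)⁻¹ * ∑ i, f i x - (n : ℝ)⁻¹ * ∑ i, f i xstar
          - ⟪(n : ℝ)⁻¹ • ∑ j, f' j xstar, x - xstar⟫) := by
  rcases Nat.eq_zero_or_pos d with hd | hd
  · -- degenerate case: the space is a single point
    subst hd
    have hxx : x = xstar := PiLp.ext fun i => i.elim0
    subst hxx
    simp
  -- main case
  have hninv : (0:ℝ) ≤ (n : ℝ)⁻¹ := by positivity
  have hLi : ∀ i, 0 ≤ Li i := by
    intro i
    set e : EuclideanSpace ℝ (Fin d) := EuclideanSpace.single ⟨0, hd⟩ (1:ℝ) with hedef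
    have h1 := hconv i 0 e
    have h2 := hsmooth i 0 e
    have he : ‖e - 0‖ ^ 2 = 1 := by
      rw [sub_zero, hedef, EuclideanSpace.norm_single]
      norm_num
    rw [he] at h2
    linarith
  set D : Fin n → ℝ := fun j => f j x - f j xstar - ⟪f' j xstar, x - xstar⟫ with hDdef
  have hD : ∀ j, 0 ≤ D j := by
    intro j
    have := hconv j xstar x
    simp only [hDdef]
    linarith
  have hLnE : (Finset.univ : Finset (Fin n)).Nonempty := ⟨⟨0, hn⟩, Finset.mem_univ _⟩
  -- continuity facts
  have hcsum : ∀ c : Fin n → ℝ, Continuous fun w : Fin n → ℝ => ∑ i, w i * c i :=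
    fun c => continuous_finset_sum _ fun i _ => (continuous_apply i).mul continuous_const
  have hc1 : ∀ z, Continuous fun w : Fin n → ℝ => (n : ℝ)⁻¹ • ∑ i, w i • f' i z :=
    fun z => by fun_prop
  have hI1 : Integrable (fun ω =>
      ‖(n : ℝ)⁻¹ • ∑ i, v ω i • f' i x - (n : ℝ)⁻¹ • ∑ i, v ω i • f' i xstar‖ ^ 2) μ :=
    stmt5_integrable μ v hv_meas hv_fin
      (fun w => ‖(n : ℝ)⁻¹ • ∑ i, w i • f' i x - (n : ℝ)⁻¹ • ∑ i, w i • f' i xstar‖ ^ 2)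
      (((hc1 x).sub (hc1 xstar)).norm.pow 2)
  have hI2 : Integrable (fun ω =>
      2 * ((n : ℝ)⁻¹ * ∑ i, v ω i * Li i) * ((n : ℝ)⁻¹ * ∑ j, v ω j * D j)) μ :=
    stmt5_integrable μ v hv_meas hv_fin
      (fun w => 2 * ((n : ℝ)⁻¹ * ∑ i, w i * Li i) * ((n : ℝ)⁻¹ * ∑ j, w j * D j))
      ((continuous_const.mul (continuous_const.mul (hcsum Li))).mul
        (continuous_const.mul (hcsum D)))
  have hIj : ∀ j : Fin n, Integrable (fun ω =>
      ((n : ℝ)⁻¹ * ∑ i, v ω i * Li i) * v ω j) μ :=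
    fun j => stmt5_integrable μ v hv_meas hv_fin
      (fun w => ((n : ℝ)⁻¹ * ∑ i, w i * Li i) * w j)
      ((continuous_const.mul (hcsum Li)).mul (continuous_apply j))
  have hpt : ∀ ω,
      ‖(n : ℝ)⁻¹ • ∑ i, v ω i • f' i x - (n : ℝ)⁻¹ • ∑ i, v ω i • f' i xstar‖ ^ 2
      ≤ 2 * ((n : ℝ)⁻¹ * ∑ i, v ω i * Li i) * ((n : ℝ)⁻¹ * ∑ j, v ω j * D j) :=
    fun ω => stmt5_weighted f f' Li hsmooth hconv (v ω) (hv_nonneg ω) hLi x xstar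
  calc ∫ ω, ‖(n : ℝ)⁻¹ • ∑ i, v ω i • f' i x - (n : ℝ)⁻¹ • ∑ i, v ω i • f' i xstar‖ ^ 2 ∂μ
      ≤ ∫ ω, 2 * ((n : ℝ)⁻¹ * ∑ i, v ω i * Li i) * ((n : ℝ)⁻¹ * ∑ j, v ω j * D j) ∂μ :=
        integral_mono hI1 hI2 hpt
    _ = ∑ j, 2 * (n : ℝ)⁻¹ * D j * ∫ ω, ((n : ℝ)⁻¹ * ∑ i, v ω i * Li i) * v ω j ∂μ := by
        have hrw : ∀ ω, 2 * ((n : ℝ)⁻¹ * ∑ i, v ω i * Li i) * ((n : ℝ)⁻¹ * ∑ j, v ω j * D j)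
            = ∑ j, 2 * (n : ℝ)⁻¹ * D j * (((n : ℝ)⁻¹ * ∑ i, v ω i * Li i) * v ω j) := by
          intro ω
          rw [show (n : ℝ)⁻¹ * ∑ j, v ω j * D j = ∑ j, (n : ℝ)⁻¹ * (v ω j * D j) from
            Finset.mul_sum _ _ _, Finset.mul_sum]
          exact Finset.sum_congr rfl fun j _ => by ring
        simp only [hrw]
        rw [integral_finset_sum _ fun j _ => (hIj j).const_mul _]
        exact Finset.sum_congr rfl fun j _ => integral_const_mul _ _
    _ ≤ ∑ j, 2 * (n : ℝ)⁻¹ * D j * (Finset.univ.sup' hLnE (fun j => ∫ ω, ((n : ℝ)⁻¹ * ∑ i, v ω i * Li i) * v ω j ∂μ)) := by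
        have hsup : ∀ j : Fin n, (∫ ω, ((n : ℝ)⁻¹ * ∑ i, v ω i * Li i) * v ω j ∂μ)
            ≤ Finset.univ.sup' hLnE
              (fun j => ∫ ω, ((n : ℝ)⁻¹ * ∑ i, v ω i * Li i) * v ω j ∂μ) :=
          fun j => Finset.le_sup'
            (fun j => ∫ ω, ((n : ℝ)⁻¹ * ∑ i, v ω i * Li i) * v ω j ∂μ) (Finset.mem_univ j)
        exact Finset.sum_le_sum fun j _ =>
          mul_le_mul_of_nonneg_left (hsup j) (mul_nonneg (by positivity) (hD j))
    _ = 2 * (Finset.univ.sup' hLnE (fun j => ∫ ω, ((n : ℝ)⁻¹ * ∑ i, v ω i * Li i) * v ω j ∂μ)) * ((n : ℝ)⁻¹ * ∑ i, f i x - (n : ℝ)⁻¹ * ∑ i, f i xstar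
          - ⟪(n : ℝ)⁻¹ • ∑ j, f' j xstar, x - xstar⟫) := by
        have hinner2 : ⟪(n : ℝ)⁻¹ • ∑ j, f' j xstar, x - xstar⟫
            = (n : ℝ)⁻¹ * ∑ j, ⟪f' j xstar, x - xstar⟫ := by
          rw [real_inner_smul_left, sum_inner]
        rw [hinner2, ← Finset.sum_mul, ← Finset.mul_sum]
        simp only [hDdef, Finset.sum_sub_distrib]
        ring
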